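/- arXiv:2011.06136 — 4 statements merged into one kernel-verified Lean document; each statement's English description precedes it below -/
import Mathlib

section
/- For a real number x > 0 and an integer n ≥ 3, (x − 1)^{φ(n)} < Φ_n(x) < (x + 1)^{φ(n)}. -/
open Polynomial Complex

lemma cyclotomic_root_re_bounds {n : ℕ} (hn : 3 ≤ n) {ζ : ℂ}
    (hp : IsPrimitiveRoot ζ n) : -1 < ζ.re ∧ ζ.re < 1 := by
  have hn0 : n ≠ 0 := by omega
  have habs : ‖ζ‖ = 1 := hp.norm'_eq_one hn0
  have hns : Complex.normSq ζ = 1 := by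
    rw [← Complex.sq_norm, habs]; norm_num
  rw [Complex.normSq_apply] at hns
  have hne1 : ζ ≠ 1 := hp.ne_one (by omega)
  have hnem1 : ζ ≠ -1 := by
    intro h
    have h2 : n ∣ 2 := hp.dvd_of_pow_eq_one 2 (by rw [h]; norm_num)
    have := Nat.le_of_dvd (by norm_num) h2
    omega
  constructor
  · by_contra hc
    push_neg at hc
    have him : ζ.im = 0 := by nlinarith
    have hre : ζ.re = -1 := by nlinarith
    exact hnem1 (Complex.ext (by simpa using hre) (by simpa using him))
  · by_contra hc
    push_neg at hc
    have him : ζ.im = 0 := by nlinarith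
    have hre : ζ.re = 1 := by nlinarith
    exact hne1 (Complex.ext (by simpa using hre) (by simpa using him))

theorem cyclotomic_eval_bounds (x : ℝ) (hx : 0 < x) (n : ℕ) (hn : 3 ≤ n) :
    (x - 1) ^ n.totient < (Polynomial.cyclotomic n ℝ).eval x ∧
      (Polynomial.cyclotomic n ℝ).eval x < (x + 1) ^ n.totient := by
  have hn0 : 0 < n := by omega
  have hζ : IsPrimitiveRoot (Complex.exp (2 * ↑Real.pi * Complex.I / ↑n)) n :=
    Complex.isPrimitiveRoot_exp n hn0.ne'
  have hpos : 0 < (cyclotomic n ℝ).eval x := cyclotomic_pos (by omega) x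
  -- express eval as product of absolute values
  have hkey : (cyclotomic n ℝ).eval x =
      ∏ ζ ∈ primitiveRoots n ℂ, ‖(x : ℂ) - ζ‖ := by
    have h1 : ((((cyclotomic n ℝ).eval x : ℝ)) : ℂ) = (cyclotomic n ℂ).eval (x : ℂ) := by
      exact (cyclotomic.eval_apply x n (algebraMap ℝ ℂ)).symm
    have h2 : (cyclotomic n ℂ).eval (x : ℂ) =
        ∏ ζ ∈ primitiveRoots n ℂ, ((x : ℂ) - ζ) := by
      rw [cyclotomic_eq_prod_X_sub_primitiveRoots hζ]
      simp [eval_prod]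
    have h3 : ‖(((cyclotomic n ℝ).eval x : ℝ) : ℂ)‖ =
        ∏ ζ ∈ primitiveRoots n ℂ, ‖(x : ℂ) - ζ‖ := by
      rw [h1, h2, norm_prod]
    rwa [Complex.norm_real, Real.norm_eq_abs, abs_of_pos hpos] at h3
  have hcard : (primitiveRoots n ℂ).card = n.totient := Complex.card_primitiveRoots n
  have hne : (primitiveRoots n ℂ).Nonempty := by
    rw [← Finset.card_pos, hcard]
    exact Nat.totient_pos.mpr hn0
  -- per-root bounds
  have hbound : ∀ ζ ∈ primitiveRoots n ℂ,
      |x - 1| < ‖(x : ℂ) - ζ‖ ∧ ‖(x : ℂ) - ζ‖ < x + 1 := by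
    intro ζ hmem
    have hp : IsPrimitiveRoot ζ n := (mem_primitiveRoots hn0).mp hmem
    obtain ⟨hre1, hre2⟩ := cyclotomic_root_re_bounds hn hp
    have hns : ζ.re ^ 2 + ζ.im ^ 2 = 1 := by
      have habs : ‖ζ‖ = 1 := hp.norm'_eq_one hn0.ne'
      have := Complex.sq_norm ζ
      rw [habs, Complex.normSq_apply] at this
      nlinarith
    have hsq : ‖(x : ℂ) - ζ‖ ^ 2 = x ^ 2 - 2 * x * ζ.re + 1 := by
      rw [Complex.sq_norm, Complex.normSq_apply]
      simp only [Complex.sub_re, Complex.sub_im, Complex.ofReal_re, Complex.ofReal_im]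
      nlinarith
    have hA : 0 ≤ ‖(x : ℂ) - ζ‖ := norm_nonneg _
    constructor
    · nlinarith [abs_nonneg (x - 1), _root_.sq_abs (x - 1)]
    · nlinarith
  constructor
  · rw [hkey]
    rcases eq_or_ne x 1 with rfl | hx1
    · have h0 : (1 - 1 : ℝ) ^ n.totient = 0 := by
        rw [sub_self]
        exact zero_pow (Nat.totient_pos.mpr hn0).ne'
      rw [h0, ← hkey]
      exact hpos
    · have h1 : (x - 1) ^ n.totient ≤ |x - 1| ^ n.totient := by
        calc (x - 1) ^ n.totient ≤ |(x - 1) ^ n.totient| := le_abs_self _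
        _ = |x - 1| ^ n.totient := abs_pow _ _
      refine h1.trans_lt ?_
      have : |x - 1| ^ n.totient = ∏ _ζ ∈ primitiveRoots n ℂ, |x - 1| := by
        rw [Finset.prod_const, hcard]
      rw [this]
      refine Finset.prod_lt_prod_of_nonempty (fun ζ hmem => ?_)
        (fun ζ hmem => (hbound ζ hmem).1) hne
      exact abs_pos.mpr (sub_ne_zero.mpr hx1)
  · rw [hkey]
    have : (x + 1) ^ n.totient = ∏ _ζ ∈ primitiveRoots n ℂ, (x + 1) := by
      rw [Finset.prod_const, hcard]
    rw [this]
    refine Finset.prod_lt_prod_of_nonempty (fun ζ hmem => ?_)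
      (fun ζ hmem => (hbound ζ hmem).2) hne
    exact (abs_nonneg (x - 1)).trans_lt (hbound ζ hmem).1
end

section
/- Let a and b be coprime odd positive integers with a > b. Then v_2(Φ_n(a,b)) = v_2(a − b) if n = 1; v_2(Φ_n(a,b)) = v_2(a + b) if n = 2; v_2(Φ_n(a,b)) = 1 if n = 2^β with β ≥ 2; and v_2(Φ_n(a,b)) = 0 for all other positive integers n. -/
/-- The homogenized `d`-th cyclotomic polynomial evaluated at `(a, b)`:
`Φ_d(a,b) = b^{φ(d)} Φ_d(a/b)`. -/
noncomputable def cycHom (d : ℕ) (a b : ℤ) : ℤ :=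
  ∑ i ∈ Finset.range (d.totient + 1),
    (Polynomial.cyclotomic d ℤ).coeff i * a ^ i * b ^ (d.totient - i)

lemma cycHom_one' (a b : ℤ) : cycHom 1 a b = a - b := by
  simp [cycHom, Finset.sum_range_succ, Polynomial.cyclotomic_one, Polynomial.coeff_one]
  ring

lemma cycHom_two' (a b : ℤ) : cycHom 2 a b = a + b := by
  simp [cycHom, Finset.sum_range_succ, Polynomial.cyclotomic_two, Polynomial.coeff_one]
  ring

lemma cycHom_two_pow' (k : ℕ) (a b : ℤ) :
    cycHom (2 ^ (k + 1)) a b = a ^ (2 ^ k) + b ^ (2 ^ k) := by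
  have h1 : Polynomial.cyclotomic (2 ^ (k + 1)) ℤ = 1 + Polynomial.X ^ (2 ^ k) := by
    rw [Polynomial.cyclotomic_prime_pow_eq_geom_sum Nat.prime_two]
    simp [Finset.sum_range_succ]
  have h2 : (2 ^ (k + 1) : ℕ).totient = 2 ^ k := by
    rw [Nat.totient_prime_pow Nat.prime_two (Nat.succ_pos k)]
    simp [pow_succ]
  rw [cycHom, h2, h1, Finset.sum_range_succ]
  have h3 : ∀ i ∈ Finset.range (2 ^ k),
      ((1 : Polynomial ℤ) + Polynomial.X ^ 2 ^ k).coeff i * a ^ i * b ^ (2 ^ k - i)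
        = (if i = 0 then b ^ (2 ^ k) else 0) := by
    intro i hi
    rw [Finset.mem_range] at hi
    rcases eq_or_ne i 0 with rfl | h
    · simp [Polynomial.coeff_X_pow, hi.ne, Polynomial.coeff_one]
    · simp [Polynomial.coeff_X_pow, hi.ne, h, Polynomial.coeff_one]
  rw [Finset.sum_congr rfl h3]
  have hpos : 0 < 2 ^ k := Nat.pow_pos (n := k) (by norm_num)
  simp [Polynomial.coeff_X_pow, hpos.ne', Finset.sum_ite_eq', hpos, Polynomial.coeff_one]
  ring

lemma odd_cast_zmod' (a : ℤ) (ha : Odd a) : ((a : ZMod 2) = 1) := by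
  obtain ⟨m, rfl⟩ := ha
  push_cast
  ring_nf
  simp [(by decide : (2 : ZMod 2) = 0)]

lemma cycHom_cast' (n : ℕ) (a b : ℤ) (ha : Odd a) (hb : Odd b) :
    ((cycHom n a b : ℤ) : ZMod 2) = (((Polynomial.cyclotomic n ℤ).eval 1 : ℤ) : ZMod 2) := by
  have hdeg : (Polynomial.cyclotomic n ℤ).natDegree = n.totient := by
    rcases Nat.eq_zero_or_pos n with rfl | hn
    · simp
    · exact Polynomial.natDegree_cyclotomic n ℤ
  rw [cycHom, Polynomial.eval_eq_sum_range, hdeg]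
  push_cast
  rw [odd_cast_zmod' a ha, odd_cast_zmod' b hb]
  simp

lemma sq_mod_four' (c : ℤ) (hc : Odd c) : (4 : ℤ) ∣ c ^ 2 - 1 := by
  obtain ⟨m, rfl⟩ := hc
  refine ⟨m ^ 2 + m, by ring⟩

lemma padicValInt_eq_one' (x : ℤ) (hx : x ≠ 0) (h2 : (2 : ℤ) ∣ x) (h4 : ¬ (4 : ℤ) ∣ x) :
    padicValInt 2 x = 1 := by
  haveI : Fact (Nat.Prime 2) := ⟨Nat.prime_two⟩
  have h1 : 1 ≤ padicValInt 2 x := by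
    have := (padicValInt_dvd_iff (p := 2) 1 x).mp (by simpa using h2)
    tauto
  have h2' : ¬ 2 ≤ padicValInt 2 x := by
    intro hle
    exact h4 (by simpa using (padicValInt_dvd_iff (p := 2) 2 x).mpr (Or.inr hle))
  omega

theorem padicValInt_two_cycHom (a b : ℕ) (hb : 1 ≤ b) (hab : b < a)
    (hco : Nat.Coprime a b) (ha : Odd a) (hbo : Odd b) :
    padicValInt 2 (cycHom 1 (a : ℤ) (b : ℤ)) = padicValInt 2 ((a : ℤ) - (b : ℤ)) ∧
      padicValInt 2 (cycHom 2 (a : ℤ) (b : ℤ)) = padicValInt 2 ((a : ℤ) + (b : ℤ)) ∧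
      (∀ β : ℕ, 2 ≤ β → padicValInt 2 (cycHom (2 ^ β) (a : ℤ) (b : ℤ)) = 1) ∧
      ∀ n : ℕ, 1 ≤ n → n ≠ 1 → n ≠ 2 → (∀ β : ℕ, 2 ≤ β → n ≠ 2 ^ β) →
        padicValInt 2 (cycHom n (a : ℤ) (b : ℤ)) = 0 := by
  have haz : Odd (a : ℤ) := by exact_mod_cast ha
  have hbz : Odd (b : ℤ) := by exact_mod_cast hbo
  refine ⟨by rw [cycHom_one'], by rw [cycHom_two'], ?_, ?_⟩
  · -- 2-power case
    intro β hβ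
    obtain ⟨m, rfl⟩ : ∃ m, β = (m + 1) + 1 := ⟨β - 2, by omega⟩
    rw [cycHom_two_pow']
    set j : ℕ := 2 ^ m with hj
    have hpow : ∀ c : ℤ, c ^ 2 ^ (m + 1) = (c ^ j) ^ 2 := by
      intro c
      rw [← pow_mul, hj, pow_succ]
    rw [hpow, hpow]
    have haj : Odd ((a : ℤ) ^ j) := haz.pow
    have hbj : Odd ((b : ℤ) ^ j) := hbz.pow
    apply padicValInt_eq_one'
    · positivity
    · obtain ⟨s, hs⟩ := haj; obtain ⟨t, ht⟩ := hbj
      exact ⟨2*s^2 + 2*s + 2*t^2 + 2*t + 1, by rw [hs, ht]; ring⟩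
    · intro h4
      have hA := sq_mod_four' _ haj
      have hB := sq_mod_four' _ hbj
      have : (4 : ℤ) ∣ 2 := by
        have := dvd_sub (dvd_sub h4 hA) hB
        simpa using this
      norm_num at this
  · -- generic case
    intro n hn1 hne1 hne2 hnp
    apply padicValInt.eq_zero_of_not_dvd
    intro hdvd
    have hz : ((cycHom n (a : ℤ) (b : ℤ) : ℤ) : ZMod 2) = 0 :=
      (ZMod.intCast_zmod_eq_zero_iff_dvd _ 2).mpr (by exact_mod_cast hdvd)
    rw [cycHom_cast' n _ _ haz hbz] at hz
    have hodd : ¬ (2 : ℤ) ∣ (Polynomial.cyclotomic n ℤ).eval 1 := by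
      by_cases hpp : ∃ p k : ℕ, p.Prime ∧ n = p ^ k
      · obtain ⟨p, k, hp, rfl⟩ := hpp
        haveI : Fact p.Prime := ⟨hp⟩
        have hk : k ≠ 0 := by rintro rfl; exact hne1 (by simp)
        obtain ⟨k', rfl⟩ : ∃ k', k = k' + 1 := ⟨k - 1, by omega⟩
        have hp2 : p ≠ 2 := by
          rintro rfl
          rcases Nat.lt_or_ge k' 1 with h | h
          · interval_cases k' <;> simp_all
          · exact hnp (k' + 1) (by omega) rfl
        rw [Polynomial.eval_one_cyclotomic_prime_pow]
        have hodd' : p % 2 = 1 := Nat.odd_iff.mp (hp.odd_of_ne_two hp2)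
        intro hd
        have : 2 ∣ p := by exact_mod_cast hd
        omega
      · rw [Polynomial.eval_one_cyclotomic_not_prime_pow]
        · norm_num
        · intro p hp k hk
          exact hpp ⟨p, k, hp, hk.symm⟩
    exact hodd (by exact_mod_cast (ZMod.intCast_zmod_eq_zero_iff_dvd _ 2).mp hz)
end

section
/- Let a > b ≥ 1 be coprime integers and n ≥ 3. If (n + 1)·P(n) < Φ_n(a, b), where P(n) is the largest prime divisor of n, then (a, b, n) has a large Zsigmondy prime. -/
/-- `p` is a Zsigmondy prime for `(a, b, n)`. -/
def IsZsigmondyPrime (a b n p : ℕ) : Prop :=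
  p.Prime ∧ (p : ℤ) ∣ (a : ℤ) ^ n - (b : ℤ) ^ n ∧
    ∀ m : ℕ, 1 ≤ m → m < n → ¬ (p : ℤ) ∣ (a : ℤ) ^ m - (b : ℤ) ^ m

/-- `p` is a large Zsigmondy prime for `(a, b, n)`. -/
def IsLargeZsigmondyPrime (a b n p : ℕ) : Prop :=
  IsZsigmondyPrime a b n p ∧
    ((p : ℤ) ^ 2 ∣ (a : ℤ) ^ n - (b : ℤ) ^ n ∨ p > n + 1)

open Polynomial in
lemma cycHom_cast {K : Type*} [Field K] (d : ℕ) (a b : ℤ) (hb : (b : K) ≠ 0) :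
    ((cycHom d a b : ℤ) : K)
      = (b : K) ^ d.totient * (cyclotomic d K).eval ((a : K) * (b : K)⁻¹) := by
  have hdeg : (cyclotomic d K).natDegree = d.totient := natDegree_cyclotomic d K
  rw [eval_eq_sum_range, hdeg]
  rw [Finset.mul_sum]
  unfold cycHom
  push_cast
  refine Finset.sum_congr rfl fun i hi => ?_
  rw [Finset.mem_range] at hi
  have hi' : i ≤ d.totient := Nat.lt_succ_iff.mp hi
  have : (cyclotomic d K).coeff i = ((cyclotomic d ℤ).coeff i : K) := by
    rw [← map_cyclotomic d (Int.castRingHom K), coeff_map]; rfl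
  rw [this, mul_pow, inv_pow]
  field_simp
  rw [mul_assoc, ← pow_add]
  have : d.totient - i + i = d.totient := by omega
  rw [this]

open Polynomial in
lemma prod_cycHom (n : ℕ) (hn : 0 < n) (a b : ℤ) (hb : b ≠ 0) :
    ∏ d ∈ n.divisors, cycHom d a b = a ^ n - b ^ n := by
  have hbQ : (b : ℚ) ≠ 0 := Int.cast_ne_zero.mpr hb
  have : ((∏ d ∈ n.divisors, cycHom d a b : ℤ) : ℚ) = ((a ^ n - b ^ n : ℤ) : ℚ) := by
    rw [Int.cast_prod]
    have step : ∀ d ∈ n.divisors, ((cycHom d a b : ℤ) : ℚ)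
        = (b : ℚ) ^ d.totient * (cyclotomic d ℚ).eval ((a : ℚ) * (b : ℚ)⁻¹) :=
      fun d _ => cycHom_cast d a b hbQ
    rw [Finset.prod_congr rfl step, Finset.prod_mul_distrib, ← eval_prod,
      prod_cyclotomic_eq_X_pow_sub_one hn, Finset.prod_pow_eq_pow_sum, Nat.sum_totient]
    simp only [eval_sub, eval_pow, eval_X, eval_one, mul_pow, inv_pow]
    field_simp
    push_cast
    ring
  exact_mod_cast this

open Polynomial in
lemma int_dvd_cycHom_iff {p : ℕ} [Fact p.Prime] {n : ℕ} {a b : ℤ} (hb : (b : ZMod p) ≠ 0) :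
    (p : ℤ) ∣ cycHom n a b ↔
      (cyclotomic n (ZMod p)).IsRoot ((a : ZMod p) * (b : ZMod p)⁻¹) := by
  rw [← ZMod.intCast_zmod_eq_zero_iff_dvd, cycHom_cast n a b hb, mul_eq_zero, IsRoot.def]
  simp [pow_ne_zero _ hb]

lemma int_dvd_sub_pow_iff {p : ℕ} [Fact p.Prime] {a b : ℤ} (hb : (b : ZMod p) ≠ 0) (m : ℕ) :
    (p : ℤ) ∣ a ^ m - b ^ m ↔ ((a : ZMod p) * (b : ZMod p)⁻¹) ^ m = 1 := by
  rw [← ZMod.intCast_zmod_eq_zero_iff_dvd]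
  push_cast
  rw [sub_eq_zero, mul_pow, inv_pow, ← div_eq_mul_inv,
    div_eq_one_iff_eq (pow_ne_zero m hb)]

lemma sub_pow_mul_cycHom_dvd {n t : ℕ} (htpos : 0 < t) (ht : t ∣ n) (htn : t ≠ n)
    (hn : 0 < n) (a b : ℤ) (hb : b ≠ 0) :
    (a ^ t - b ^ t) * cycHom n a b ∣ a ^ n - b ^ n := by
  have htltn : t < n := lt_of_le_of_ne (Nat.le_of_dvd hn ht) htn
  rw [← prod_cycHom n hn a b hb, ← prod_cycHom t htpos a b hb,
    ← Finset.mul_prod_erase _ _ (Nat.mem_divisors_self n hn.ne'), mul_comm]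
  refine mul_dvd_mul_left _ (Finset.prod_dvd_prod_of_subset _ _ _ fun d hd => ?_)
  rw [Nat.mem_divisors] at hd
  rw [Finset.mem_erase, Nat.mem_divisors]
  exact ⟨fun hdn => absurd (hdn ▸ Nat.le_of_dvd htpos hd.1) (by omega),
    hd.1.trans ht, hn.ne'⟩

lemma not_sq_dvd_cycHom {q n m' k : ℕ} (hq : q.Prime) {a b : ℤ} (hb : 0 < b) (hab : b < a)
    (hk : 1 ≤ k) (hk2 : q = 2 → 2 ≤ k)
    (heq : q ^ k * m' = n) (hm'pos : 0 < m')
    (hAB : (q : ℤ) ∣ a ^ m' - b ^ m') (hqa : ¬ (q : ℤ) ∣ a) :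
    ¬ (q : ℤ) ^ 2 ∣ cycHom n a b := by
  intro hsq
  have hqP : Prime (q : ℤ) := Nat.prime_iff_prime_int.mp hq
  set A : ℤ := a ^ m' with hA
  set B : ℤ := b ^ m' with hB
  have hBA : B < A := by
    exact pow_lt_pow_left₀ hab hb.le hm'pos.ne'
  have hBpos : 0 < B := pow_pos hb _
  have hqA : ¬ (q : ℤ) ∣ A := fun h => hqa (hqP.dvd_of_dvd_pow h)
  have hnpos : 0 < n := heq ▸ Nat.mul_pos (pow_pos hq.pos k) hm'pos
  set t : ℕ := q ^ (k - 1) * m' with htdef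
  have htpos : 0 < t := Nat.mul_pos (pow_pos hq.pos _) hm'pos
  have hqt : q * t = n := by
    rw [htdef, ← heq, ← mul_assoc, ← pow_succ']
    congr 2
    omega
  have htdvd : t ∣ n := Dvd.intro_left q hqt
  have htn : t ≠ n := by
    intro hteq
    have := hqt
    rw [hteq] at this
    nlinarith [hq.two_le, hnpos]
  have hchain := sub_pow_mul_cycHom_dvd htpos htdvd htn hnpos a b hb.ne'
  have hdvd2 : (a ^ t - b ^ t) * (q : ℤ) ^ 2 ∣ a ^ n - b ^ n :=
    dvd_trans (mul_dvd_mul_left _ hsq) hchain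
  -- rewrite as powers of A, B
  have han : a ^ n = A ^ q ^ k := by rw [hA, ← pow_mul, mul_comm, heq]
  have hbn : b ^ n = B ^ q ^ k := by rw [hB, ← pow_mul, mul_comm, heq]
  have hat : a ^ t = A ^ q ^ (k - 1) := by rw [hA, ← pow_mul, mul_comm]
  have hbt : b ^ t = B ^ q ^ (k - 1) := by rw [hB, ← pow_mul, mul_comm]
  have hle : emultiplicity (q : ℤ) (a ^ t - b ^ t) + 2 ≤
      emultiplicity (q : ℤ) (a ^ n - b ^ n) := by
    calc emultiplicity (q : ℤ) (a ^ t - b ^ t) + 2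
        = emultiplicity (q : ℤ) ((a ^ t - b ^ t) * (q : ℤ) ^ 2) := by
          rw [emultiplicity_mul hqP, emultiplicity_pow_self_of_prime hqP]
          rfl
      _ ≤ emultiplicity (q : ℤ) (a ^ n - b ^ n) :=
          emultiplicity_le_emultiplicity_of_dvd_right hdvd2
  rw [han, hbn, hat, hbt] at hle
  rcases eq_or_ne q 2 with rfl | hq2
  · -- q = 2
    have hk2' : 2 ≤ k := hk2 rfl
    simp only [Nat.cast_ofNat] at hle
    have hA2 : ¬ (2 : ℤ) ∣ A := by exact_mod_cast hqA
    have hAB2 : (2 : ℤ) ∣ A - B := by exact_mod_cast hAB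
    have hev1 : Even (2 ^ k) := by
      refine (Nat.even_pow).mpr ⟨even_two, by omega⟩
    have hev2 : Even (2 ^ (k - 1)) := by
      refine (Nat.even_pow).mpr ⟨even_two, by omega⟩
    have h1 := Int.two_pow_sub_pow hAB2 hA2 hev1
    have h2 := Int.two_pow_sub_pow hAB2 hA2 hev2
    have hc1 : FiniteMultiplicity (2 : ℤ) (A + B) :=
      Int.finiteMultiplicity_iff.mpr ⟨by norm_num, (add_pos (hBpos.trans hBA) hBpos).ne'⟩
    have hc2 : FiniteMultiplicity (2 : ℤ) (A - B) :=
      Int.finiteMultiplicity_iff.mpr ⟨by norm_num, sub_ne_zero.mpr hBA.ne'⟩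
    have hu : FiniteMultiplicity (2 : ℤ) (A ^ 2 ^ k - B ^ 2 ^ k) :=
      Int.finiteMultiplicity_iff.mpr ⟨by norm_num,
        sub_ne_zero.mpr (pow_lt_pow_left₀ hBA hBpos.le (by positivity)).ne'⟩
    have hv : FiniteMultiplicity (2 : ℤ) (A ^ 2 ^ (k - 1) - B ^ 2 ^ (k - 1)) :=
      Int.finiteMultiplicity_iff.mpr ⟨by norm_num,
        sub_ne_zero.mpr (pow_lt_pow_left₀ hBA hBpos.le (by positivity)).ne'⟩
    have hek : emultiplicity (2 : ℤ) ((2 ^ k : ℕ) : ℤ) = (k : ℕ∞) := by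
      push_cast
      exact emultiplicity_pow_self_of_prime Int.prime_two k
    have hek1 : emultiplicity (2 : ℤ) ((2 ^ (k - 1) : ℕ) : ℤ) = ((k - 1 : ℕ) : ℕ∞) := by
      push_cast
      exact emultiplicity_pow_self_of_prime Int.prime_two (k - 1)
    rw [hek, hu.emultiplicity_eq_multiplicity, hc1.emultiplicity_eq_multiplicity,
      hc2.emultiplicity_eq_multiplicity] at h1
    rw [hek1, hv.emultiplicity_eq_multiplicity, hc1.emultiplicity_eq_multiplicity,
      hc2.emultiplicity_eq_multiplicity] at h2
    rw [hu.emultiplicity_eq_multiplicity, hv.emultiplicity_eq_multiplicity] at hle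
    have h1' : multiplicity (2 : ℤ) (A ^ 2 ^ k - B ^ 2 ^ k) + 1 =
        multiplicity (2 : ℤ) (A + B) + multiplicity (2 : ℤ) (A - B) + k := by
      exact_mod_cast h1
    have h2' : multiplicity (2 : ℤ) (A ^ 2 ^ (k - 1) - B ^ 2 ^ (k - 1)) + 1 =
        multiplicity (2 : ℤ) (A + B) + multiplicity (2 : ℤ) (A - B) + (k - 1) := by
      exact_mod_cast h2
    have hle' : multiplicity (2 : ℤ) (A ^ 2 ^ (k - 1) - B ^ 2 ^ (k - 1)) + 2 ≤
        multiplicity (2 : ℤ) (A ^ 2 ^ k - B ^ 2 ^ k) := by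
      exact_mod_cast hle
    omega
  · -- q odd
    have hodd : Odd q := hq.odd_of_ne_two hq2
    have h1 := Int.emultiplicity_pow_sub_pow hq hodd hAB hqA (q ^ k)
    have h2 := Int.emultiplicity_pow_sub_pow hq hodd hAB hqA (q ^ (k - 1))
    have hc2 : FiniteMultiplicity ((q : ℕ) : ℤ) (A - B) :=
      Int.finiteMultiplicity_iff.mpr ⟨by simpa using hq.ne_one,
        sub_ne_zero.mpr hBA.ne'⟩
    have hu : FiniteMultiplicity ((q : ℕ) : ℤ) (A ^ q ^ k - B ^ q ^ k) :=
      Int.finiteMultiplicity_iff.mpr ⟨by simpa using hq.ne_one,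
        sub_ne_zero.mpr (pow_lt_pow_left₀ hBA hBpos.le (pow_pos hq.pos _).ne').ne'⟩
    have hv : FiniteMultiplicity ((q : ℕ) : ℤ) (A ^ q ^ (k - 1) - B ^ q ^ (k - 1)) :=
      Int.finiteMultiplicity_iff.mpr ⟨by simpa using hq.ne_one,
        sub_ne_zero.mpr (pow_lt_pow_left₀ hBA hBpos.le (pow_pos hq.pos _).ne').ne'⟩
    have hek : emultiplicity q (q ^ k) = (k : ℕ∞) :=
      emultiplicity_pow_self_of_prime hq.prime k
    have hek1 : emultiplicity q (q ^ (k - 1)) = ((k - 1 : ℕ) : ℕ∞) :=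
      emultiplicity_pow_self_of_prime hq.prime (k - 1)
    rw [hek, hu.emultiplicity_eq_multiplicity, hc2.emultiplicity_eq_multiplicity] at h1
    rw [hek1, hv.emultiplicity_eq_multiplicity, hc2.emultiplicity_eq_multiplicity] at h2
    rw [hu.emultiplicity_eq_multiplicity, hv.emultiplicity_eq_multiplicity] at hle
    have h1' : multiplicity ((q : ℕ) : ℤ) (A ^ q ^ k - B ^ q ^ k) =
        multiplicity ((q : ℕ) : ℤ) (A - B) + k := by exact_mod_cast h1
    have h2' : multiplicity ((q : ℕ) : ℤ) (A ^ q ^ (k - 1) - B ^ q ^ (k - 1)) =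
        multiplicity ((q : ℕ) : ℤ) (A - B) + (k - 1) := by exact_mod_cast h2
    have hle' : multiplicity ((q : ℕ) : ℤ) (A ^ q ^ (k - 1) - B ^ q ^ (k - 1)) + 2 ≤
        multiplicity ((q : ℕ) : ℤ) (A ^ q ^ k - B ^ q ^ k) := by
      exact_mod_cast hle
    omega

lemma cycHom_dvd_sub_pow {n : ℕ} (hn : 0 < n) (a b : ℤ) (hb : b ≠ 0) :
    cycHom n a b ∣ a ^ n - b ^ n := by
  rw [← prod_cycHom n hn a b hb]
  exact Finset.dvd_prod_of_mem _ (Nat.mem_divisors_self n hn.ne')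

lemma not_dvd_ab {a b n q : ℕ} (hb : 1 ≤ b) (hab : b < a) (hco : Nat.Coprime a b)
    (hn : 0 < n) (hq : q.Prime) (hqN : (q : ℤ) ∣ cycHom n (a : ℤ) (b : ℤ)) :
    ¬ (q : ℤ) ∣ (a : ℤ) ∧ ¬ (q : ℤ) ∣ (b : ℤ) := by
  have hqdvd : (q : ℤ) ∣ (a : ℤ) ^ n - (b : ℤ) ^ n :=
    hqN.trans (cycHom_dvd_sub_pow hn _ _ (by exact_mod_cast (by omega : b ≠ 0)))
  have key : ¬ (q ∣ a ∧ q ∣ b) := by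
    rintro ⟨h1, h2⟩
    have := Nat.dvd_gcd h1 h2
    rw [hco] at this
    exact hq.one_lt.ne' (Nat.dvd_one.mp this)
  have hqP : Prime (q : ℤ) := Nat.prime_iff_prime_int.mp hq
  constructor
  · intro hA
    have h2 : (q : ℤ) ∣ (b : ℤ) ^ n := by
      have h1 : (q : ℤ) ∣ (a : ℤ) ^ n := dvd_pow hA hn.ne'
      have := dvd_sub h1 hqdvd
      simpa using this
    have hB := hqP.dvd_of_dvd_pow h2
    exact key ⟨Int.natCast_dvd_natCast.mp hA, Int.natCast_dvd_natCast.mp hB⟩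
  · intro hB
    have h2 : (q : ℤ) ∣ (a : ℤ) ^ n := by
      have h1 : (q : ℤ) ∣ (b : ℤ) ^ n := dvd_pow hB hn.ne'
      have := dvd_add hqdvd h1
      simpa using this
    have hA := hqP.dvd_of_dvd_pow h2
    exact key ⟨Int.natCast_dvd_natCast.mp hA, Int.natCast_dvd_natCast.mp hB⟩

open Polynomial in
lemma zsig_of_not_dvd {a b n q : ℕ} (hb : 1 ≤ b) (hab : b < a) (hco : Nat.Coprime a b)
    (hn : 3 ≤ n) (hq : q.Prime) (hqN : (q : ℤ) ∣ cycHom n (a : ℤ) (b : ℤ))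
    (hqn : ¬ q ∣ n) : IsZsigmondyPrime a b n q ∧ n + 1 ≤ q := by
  haveI : Fact q.Prime := ⟨hq⟩
  have hnpos : 0 < n := by omega
  obtain ⟨hqa, hqb⟩ := not_dvd_ab hb hab hco hnpos hq hqN
  have hbz : (((b : ℤ)) : ZMod q) ≠ 0 := by
    rw [Ne, ZMod.intCast_zmod_eq_zero_iff_dvd]; exact hqb
  set ζ : ZMod q := (((a : ℤ)) : ZMod q) * (((b : ℤ)) : ZMod q)⁻¹ with hζ
  have hroot : (cyclotomic n (ZMod q)).IsRoot ζ := (int_dvd_cycHom_iff hbz).mp hqN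
  haveI : NeZero ((n : ℕ) : ZMod q) := ⟨by
    rw [Ne, ZMod.natCast_eq_zero_iff]; exact hqn⟩
  have hprim : IsPrimitiveRoot ζ n := (isRoot_cyclotomic_iff).mp hroot
  have hzne : ζ ≠ 0 := hprim.ne_zero hnpos.ne'
  have horder : orderOf ζ = n := hprim.eq_orderOf.symm
  have hdvd : n ∣ q - 1 := by
    rw [← horder]
    exact orderOf_dvd_of_pow_eq_one (ZMod.pow_card_sub_one_eq_one hzne)
  have hq1 : n + 1 ≤ q := by
    have h1 := Nat.le_of_dvd (by have := hq.two_le; omega) hdvd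
    have := hq.two_le
    omega
  have hqdvd : (q : ℤ) ∣ (a : ℤ) ^ n - (b : ℤ) ^ n :=
    hqN.trans (cycHom_dvd_sub_pow hnpos _ _ (by exact_mod_cast (by omega : b ≠ 0)))
  refine ⟨⟨hq, hqdvd, fun m h1 h2 hdvdm => ?_⟩, hq1⟩
  rw [int_dvd_sub_pow_iff hbz] at hdvdm
  have hnm : n ∣ m := by
    rw [← horder]
    exact orderOf_dvd_of_pow_eq_one hdvdm
  have := Nat.le_of_dvd (by omega) hnm
  omega

open Polynomial in
lemma sup_eq_and_not_sq_of_dvd {a b n q : ℕ} (hb : 1 ≤ b) (hab : b < a)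
    (hco : Nat.Coprime a b) (hn : 3 ≤ n) (hq : q.Prime)
    (hqN : (q : ℤ) ∣ cycHom n (a : ℤ) (b : ℤ)) (hqn : q ∣ n) :
    q = n.primeFactors.sup id ∧ ¬ (q : ℤ) ^ 2 ∣ cycHom n (a : ℤ) (b : ℤ) := by
  haveI : Fact q.Prime := ⟨hq⟩
  have hnpos : 0 < n := by omega
  obtain ⟨hqa, hqb⟩ := not_dvd_ab hb hab hco hnpos hq hqN
  have hbz : (((b : ℤ)) : ZMod q) ≠ 0 := by
    rw [Ne, ZMod.intCast_zmod_eq_zero_iff_dvd]; exact hqb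
  set ζ : ZMod q := (((a : ℤ)) : ZMod q) * (((b : ℤ)) : ZMod q)⁻¹ with hζ
  have hroot : (cyclotomic n (ZMod q)).IsRoot ζ := (int_dvd_cycHom_iff hbz).mp hqN
  set k : ℕ := n.factorization q with hkdef
  set m' : ℕ := n / q ^ k with hm'def
  have hk : 1 ≤ k := hq.factorization_pos_of_dvd hnpos.ne' hqn
  have heq : q ^ k * m' = n := Nat.ordProj_mul_ordCompl_eq_self n q
  have hm'ndvd : ¬ q ∣ m' := Nat.not_dvd_ordCompl hq hnpos.ne'
  have hm'pos : 0 < m' := Nat.ordCompl_pos q hnpos.ne'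
  haveI : NeZero ((m' : ℕ) : ZMod q) := ⟨by
    rw [Ne, ZMod.natCast_eq_zero_iff]; exact hm'ndvd⟩
  rw [← heq] at hroot
  have hprim : IsPrimitiveRoot ζ m' :=
    (isRoot_cyclotomic_prime_pow_mul_iff_of_charP).mp hroot
  have horder : orderOf ζ = m' := hprim.eq_orderOf.symm
  have hzne : ζ ≠ 0 := hprim.ne_zero hm'pos.ne'
  have hm'q : m' ∣ q - 1 := by
    rw [← horder]
    exact orderOf_dvd_of_pow_eq_one (ZMod.pow_card_sub_one_eq_one hzne)
  have hm'le : m' ≤ q - 1 := Nat.le_of_dvd (by have := hq.two_le; omega) hm'q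
  have hsup : q = n.primeFactors.sup id := by
    refine le_antisymm ?_ ?_
    · exact Finset.le_sup (f := id) (Nat.mem_primeFactors.mpr ⟨hq, hqn, hnpos.ne'⟩)
    · refine Finset.sup_le fun r hr => ?_
      show r ≤ q
      obtain ⟨hrp, hrn, -⟩ := Nat.mem_primeFactors.mp hr
      rw [← heq] at hrn
      rcases (Nat.Prime.dvd_mul hrp).mp hrn with h | h
      · have : r ∣ q := hrp.dvd_of_dvd_pow h
        exact le_of_eq ((Nat.prime_dvd_prime_iff_eq hrp hq).mp this)
      · have h1 := Nat.le_of_dvd hm'pos h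
        have := hq.two_le
        omega
  have hABdvd : (q : ℤ) ∣ (a : ℤ) ^ m' - (b : ℤ) ^ m' :=
    (int_dvd_sub_pow_iff hbz m').mpr hprim.pow_eq_one
  have hk2 : q = 2 → 2 ≤ k := by
    intro hq2
    subst hq2
    have hm1 : m' = 1 := Nat.dvd_one.mp (by simpa using hm'q)
    rw [hm1, mul_one] at heq
    by_contra hlt
    have hk1 : k = 1 := by omega
    rw [hk1] at heq
    omega
  exact ⟨hsup, not_sq_dvd_cycHom hq (by exact_mod_cast hb) (by exact_mod_cast hab)
    hk hk2 heq hm'pos hABdvd hqa⟩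

theorem large_zsigmondy_of_cycHom_large (a b n : ℕ) (hb : 1 ≤ b) (hab : b < a)
    (hco : Nat.Coprime a b) (hn : 3 ≤ n)
    (h : ((n + 1) * (n.primeFactors.sup id) : ℤ) < cycHom n (a : ℤ) (b : ℤ)) :
    ∃ p : ℕ, IsLargeZsigmondyPrime a b n p := by
  by_contra hcon
  push_neg at hcon
  set P : ℕ := n.primeFactors.sup id with hP
  set N : ℤ := cycHom n (a : ℤ) (b : ℤ) with hNdef
  have hnpos : 0 < n := by omega
  obtain ⟨p0, hp0, hp0n⟩ := Nat.exists_prime_and_dvd (show n ≠ 1 by omega)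
  have hp0mem : p0 ∈ n.primeFactors := Nat.mem_primeFactors.mpr ⟨hp0, hp0n, by omega⟩
  have hP2 : 2 ≤ P := le_trans hp0.two_le (Finset.le_sup (f := id) hp0mem)
  have hPn : P ≤ n :=
    Finset.sup_le fun r hr => Nat.le_of_dvd hnpos (Nat.mem_primeFactors.mp hr).2.1
  have hNpos : 0 < N := lt_of_le_of_lt (by positivity) h
  have hNdvd : N ∣ (a : ℤ) ^ n - (b : ℤ) ^ n :=
    cycHom_dvd_sub_pow hnpos _ _ (by exact_mod_cast (show b ≠ 0 by omega))
  set M : ℕ := N.toNat with hM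
  have hMN : (M : ℤ) = N := Int.toNat_of_nonneg hNpos.le
  have key : ∀ q : ℕ, q.Prime → q ∣ M → (q = n + 1 ∨ q = P) ∧ ¬ (q : ℤ) ^ 2 ∣ N := by
    intro q hq hqM
    have hqN : (q : ℤ) ∣ N := by
      rw [← hMN]
      exact_mod_cast Int.natCast_dvd_natCast.mpr hqM
    by_cases hqn : q ∣ n
    · obtain ⟨h1, h2⟩ := sup_eq_and_not_sq_of_dvd hb hab hco hn hq hqN hqn
      exact ⟨Or.inr h1, h2⟩
    · obtain ⟨hzsig, hge⟩ := zsig_of_not_dvd hb hab hco hn hq hqN hqn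
      have hthis := hcon q
      rw [IsLargeZsigmondyPrime] at hthis
      have h3 : ¬((q : ℤ) ^ 2 ∣ (a : ℤ) ^ n - (b : ℤ) ^ n ∨ q > n + 1) :=
        fun hor => hthis ⟨hzsig, hor⟩
      push_neg at h3
      exact ⟨Or.inl (le_antisymm h3.2 hge),
        fun hsq => h3.1 (hsq.trans hNdvd)⟩
  have hMpos : 0 < M := by omega
  have hsqf : Squarefree M := by
    rw [Nat.squarefree_iff_prime_squarefree]
    intro q hq hqq
    have hqM : q ∣ M := (dvd_mul_right q q).trans hqq
    refine (key q hq hqM).2 ?_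
    rw [← hMN]
    have : q ^ 2 ∣ M := by rwa [pow_two]
    exact_mod_cast Int.natCast_dvd_natCast.mpr this
  have hsub : M.primeFactors ⊆ {n + 1, P} := by
    intro q hq'
    obtain ⟨hq, hqM, -⟩ := Nat.mem_primeFactors.mp hq'
    rcases (key q hq hqM).1 with hh | hh
    · simp [hh]
    · simp [hh]
  have hMdvd : M ∣ (n + 1) * P := by
    have h1 : M = ∏ p ∈ M.primeFactors, p := (Nat.prod_primeFactors_of_squarefree hsqf).symm
    have h2 : ∏ p ∈ M.primeFactors, p ∣ ∏ p ∈ ({n + 1, P} : Finset ℕ), p :=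
      Finset.prod_dvd_prod_of_subset _ _ _ hsub
    rw [Finset.prod_pair (by omega : n + 1 ≠ P)] at h2
    rw [h1]; exact h2
  have hle : M ≤ (n + 1) * P := Nat.le_of_dvd (Nat.mul_pos (by omega) (by omega)) hMdvd
  have hle' : (M : ℤ) ≤ ((n + 1) * P : ℕ) := by exact_mod_cast hle
  push_cast at hle'
  rw [← hMN] at h
  linarith
end

section
/- Let a > b ≥ 1 be coprime integers. The triple (a, b, 2) has a large Zsigmondy prime if and only if a + b is not of the form 2^s·3^t with s ≥ 0 and t ∈ {0, 1}. -/
lemma aux_rep : ∀ N : ℕ, N ≠ 0 → (∀ p : ℕ, p.Prime → p ∣ N → p ≤ 3) → ¬ (9 ∣ N) →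
    ∃ s t : ℕ, t ≤ 1 ∧ N = 2 ^ s * 3 ^ t := by
  intro N
  induction N using Nat.strong_induction_on with
  | _ N ih =>
    intro hN h1 h2
    rcases eq_or_ne N 1 with h | h
    · exact ⟨0, 0, by norm_num, by simp [h]⟩
    · have hp := Nat.minFac_prime h
      have hpd : N.minFac ∣ N := Nat.minFac_dvd N
      have hle : N.minFac ≤ 3 := h1 _ hp hpd
      have h2le : 2 ≤ N.minFac := hp.two_le
      obtain ⟨M, hM⟩ := hpd
      have hM0 : M ≠ 0 := by rintro rfl; simp at hM; exact hN hM
      have hMdvd : M ∣ N := ⟨N.minFac, by rw [mul_comm]; exact hM⟩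
      have hMlt : M < N := by
        have h1p : 1 < N.minFac := hp.one_lt
        have hMp := Nat.pos_of_ne_zero hM0
        nlinarith
      interval_cases hpf : N.minFac
      · -- minFac = 2
        obtain ⟨s, t, ht, hst⟩ := ih M hMlt hM0
          (fun q hq hqd => h1 q hq (hqd.trans hMdvd))
          (fun h9 => h2 (h9.trans hMdvd))
        exact ⟨s + 1, t, ht, by rw [hM, hst]; ring⟩
      · -- minFac = 3
        have h3M : ¬ 3 ∣ M := by
          intro h3
          obtain ⟨k, hk⟩ := h3
          exact h2 ⟨k, by rw [hM, hk]; ring⟩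
        obtain ⟨s, t, ht, hst⟩ := ih M hMlt hM0
          (fun q hq hqd => h1 q hq (hqd.trans hMdvd))
          (fun h9 => h3M ((by norm_num : (3:ℕ) ∣ 9).trans h9))
        have ht0 : t = 0 := by
          by_contra ht1
          have : t = 1 := by omega
          subst this
          exact h3M ⟨2 ^ s, by rw [hst]; ring⟩
        subst ht0
        exact ⟨s, 1, le_rfl, by rw [hM, hst]; ring⟩

lemma key_zsig (a b p : ℕ) (hco : Nat.Coprime a b) (hp : p.Prime) (hp2 : p ≠ 2)
    (hpd : p ∣ a + b) : IsZsigmondyPrime a b 2 p := by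
  have hpz : Prime (p : ℤ) := Nat.prime_iff_prime_int.mp hp
  have hpab : (p : ℤ) ∣ (a : ℤ) + b := by
    have h := Int.natCast_dvd_natCast.mpr hpd
    push_cast at h
    exact h
  refine ⟨hp, ?_, ?_⟩
  · have hfac : (a:ℤ)^2 - (b:ℤ)^2 = ((a:ℤ) - b) * ((a:ℤ) + b) := by ring
    rw [hfac]
    exact hpab.mul_left _
  · intro m hm1 hm2 hdiv
    have hm : m = 1 := by omega
    subst hm
    rw [pow_one, pow_one] at hdiv
    have h2a : (p:ℤ) ∣ 2 * a := by
      have h := dvd_add hpab hdiv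
      have e : ((a:ℤ) + b) + ((a:ℤ) - b) = 2 * a := by ring
      rwa [e] at h
    have h2b : (p:ℤ) ∣ 2 * b := by
      have h := dvd_sub hpab hdiv
      have e : ((a:ℤ) + b) - ((a:ℤ) - b) = 2 * b := by ring
      rwa [e] at h
    have hpne2 : ¬ (p:ℤ) ∣ 2 := by
      intro h
      have h' : p ∣ 2 := by exact_mod_cast h
      have := Nat.le_of_dvd (by norm_num) h'
      have := hp.two_le
      omega
    have hpa : p ∣ a := by
      have := (hpz.dvd_mul.mp h2a).resolve_left hpne2
      exact_mod_cast this
    have hpb : p ∣ b := by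
      have := (hpz.dvd_mul.mp h2b).resolve_left hpne2
      exact_mod_cast this
    have : p ∣ 1 := hco ▸ Nat.dvd_gcd hpa hpb
    have := Nat.le_of_dvd one_pos this
    have := hp.two_le
    omega

theorem large_zsigmondy_two_iff (a b : ℕ) (hb : 1 ≤ b) (hab : b < a)
    (hco : Nat.Coprime a b) :
    (∃ p : ℕ, IsLargeZsigmondyPrime a b 2 p) ↔
      ¬ ∃ s t : ℕ, t ≤ 1 ∧ a + b = 2 ^ s * 3 ^ t := by
  constructor
  · rintro ⟨p, ⟨⟨hp, hdvd, hnd⟩, hlarge⟩⟩ ⟨s, t, ht, hst⟩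
    have hpz : Prime (p:ℤ) := Nat.prime_iff_prime_int.mp hp
    have hnd1 : ¬ (p:ℤ) ∣ (a:ℤ) - b := by
      have := hnd 1 le_rfl one_lt_two
      simpa using this
    have hfac : (a:ℤ)^2 - (b:ℤ)^2 = ((a:ℤ) - b) * ((a:ℤ) + b) := by ring
    have hpab : (p:ℤ) ∣ (a:ℤ) + b := by
      rw [hfac] at hdvd
      exact (hpz.dvd_mul.mp hdvd).resolve_left hnd1
    have hpabn : p ∣ a + b := by
      have h : (p:ℤ) ∣ ((a + b : ℕ) : ℤ) := by push_cast; exact hpab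
      exact_mod_cast h
    rw [hst] at hpabn
    have hp23 : p = 2 ∨ p = 3 := by
      rcases (Nat.Prime.dvd_mul hp).mp hpabn with h | h
      · left; exact (Nat.prime_dvd_prime_iff_eq hp Nat.prime_two).mp (hp.dvd_of_dvd_pow h)
      · right; exact (Nat.prime_dvd_prime_iff_eq hp Nat.prime_three).mp (hp.dvd_of_dvd_pow h)
    rcases hp23 with rfl | rfl
    · apply hnd1
      have h : (2:ℤ) ∣ ((a:ℤ) + b) - 2 * b := dvd_sub hpab ⟨b, rfl⟩
      have e : ((a:ℤ) + b) - 2 * b = (a:ℤ) - b := by ring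
      rwa [e] at h
    · have h9 : ((3:ℕ):ℤ)^2 ∣ ((a:ℤ) - b) * ((a:ℤ) + b) := by
        rcases hlarge with h | h
        · rw [hfac] at h; exact h
        · omega
      have h9ab : (3:ℤ)^2 ∣ (a:ℤ) + b := by
        have h3 : Prime (3:ℤ) := Int.prime_three
        push_cast at h9
        exact h3.pow_dvd_of_dvd_mul_left 2 hnd1 h9
      have h9n : 9 ∣ a + b := by
        have h9ab' : (9:ℤ) ∣ (a:ℤ) + b := by norm_num at h9ab; exact h9ab
        have h : ((9:ℕ):ℤ) ∣ ((a + b : ℕ) : ℤ) := by push_cast; exact h9ab'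
        exact_mod_cast h
      rw [hst] at h9n
      have h32 : (3:ℕ) ∣ 2 ^ s := by
        interval_cases t
        · have h9' : 9 ∣ 2 ^ s := by simpa using h9n
          exact dvd_trans (by norm_num) h9'
        · obtain ⟨k, hk⟩ := h9n
          norm_num at hk
          exact ⟨k, by omega⟩
      have := Nat.Prime.dvd_of_dvd_pow Nat.prime_three h32
      omega
  · intro h
    by_cases h9 : 9 ∣ a + b
    · refine ⟨3, key_zsig a b 3 hco Nat.prime_three (by norm_num)
        ((by norm_num : (3:ℕ) ∣ 9).trans h9), Or.inl ?_⟩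
      have hfac : (a:ℤ)^2 - (b:ℤ)^2 = ((a:ℤ) - b) * ((a:ℤ) + b) := by ring
      rw [hfac]
      have h9z : ((3:ℕ):ℤ)^2 ∣ (a:ℤ) + b := by
        have h' := Int.natCast_dvd_natCast.mpr h9
        push_cast at h' ⊢
        norm_num
        exact h'
      exact h9z.mul_left _
    · have hex : ∃ p, p.Prime ∧ p ∣ (a + b) ∧ 4 ≤ p := by
        by_contra hc
        push_neg at hc
        exact h (aux_rep (a + b) (by omega) (fun p hp hd => by
          by_contra hle; exact absurd (hc p hp hd) (by omega)) h9)
      obtain ⟨p, hp, hpd, hp4⟩ := hex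
      exact ⟨p, key_zsig a b p hco hp (by omega) hpd, Or.inr (by omega)⟩
end
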